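/- No tower is computably enumerable: if G ⊆ ℕ is a c.e. set such that for every n the column G_{n+1} is almost contained in G_n (G_{n+1} \ G_n is finite) and G_n \ G_{n+1} is infinite, then there exists an infinite computable set R with R \ G_n finite for every n; in particular the tower described by G is not maximal among the computable sets. -/

import Mathlib

/-- The `n`-th column of a set of naturals. -/
def column (G : Set ℕ) (n : ℕ) : Set ℕ := {x | Nat.pair x n ∈ G}

open Nat.Partrec Nat.Partrec.Code

/-- Stage-`s` approximation to membership via a code. -/
def towerT (c : Code) (s x : ℕ) : Bool := (evaln s c x).isSome

/-- `x` is confirmed (by stage `s`) to be in all columns `i ≤ n`. -/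
def towerAll (c : Code) (x s : ℕ) : ℕ → Bool
  | 0 => towerT c s (Nat.pair x 0)
  | n + 1 => towerAll c x s n && towerT c s (Nat.pair x (n + 1))

/-- Decidable search predicate: `t = pair x s` with `n ≤ x` and all confirmations. -/
def towerD (c : Code) (n t : ℕ) : Bool :=
  decide (n ≤ t.unpair.1) && towerAll c t.unpair.1 t.unpair.2 n

theorem towerT_mono {c : Code} {s s' x : ℕ} (h : s ≤ s') (ht : towerT c s x = true) :
    towerT c s' x = true := by
  unfold towerT at *
  obtain ⟨y, hy⟩ := Option.isSome_iff_exists.1 ht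
  exact Option.isSome_iff_exists.2 ⟨y, evaln_mono h hy⟩

theorem towerAll_iff {c : Code} {x s n : ℕ} :
    towerAll c x s n = true ↔ ∀ i ≤ n, towerT c s (Nat.pair x i) = true := by
  induction n with
  | zero =>
    simp only [towerAll]
    constructor
    · rintro h i hi; interval_cases i; exact h
    · intro h; exact h 0 le_rfl
  | succ n ih =>
    simp only [towerAll, Bool.and_eq_true, ih]
    constructor
    · rintro ⟨h1, h2⟩ i hi
      rcases Nat.lt_or_ge i (n + 1) with h | h
      · exact h1 i (Nat.lt_succ_iff.1 h)
      · have : i = n + 1 := le_antisymm hi h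
        subst this; exact h2
    · intro h
      exact ⟨fun i hi => h i (hi.trans (Nat.le_succ n)), h (n + 1) le_rfl⟩

theorem towerAll_primrec (c : Code) :
    Primrec fun q : (ℕ × ℕ) × ℕ => towerAll c q.1.1 q.1.2 q.2 := by
  have hT : Primrec₂ (towerT c) := by
    have : Primrec fun q : ℕ × ℕ => evaln q.1 c q.2 :=
      primrec_evaln.comp ((Primrec.fst.pair (Primrec.const c)).pair Primrec.snd)
    exact (Primrec.option_isSome.comp this).to₂
  have hrec : Primrec₂ fun (a : ℕ × ℕ) (n : ℕ) =>
      (n.rec (towerT c a.2 (Nat.pair a.1 0))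
        (fun m ih => ih && towerT c a.2 (Nat.pair a.1 (m + 1))) : Bool) := by
    apply Primrec.nat_rec (f := fun a : ℕ × ℕ => towerT c a.2 (Nat.pair a.1 0))
      (g := fun (a : ℕ × ℕ) (p : ℕ × Bool) => p.2 && towerT c a.2 (Nat.pair a.1 (p.1 + 1)))
    · exact hT.comp Primrec.snd (Primrec₂.natPair.comp Primrec.fst (Primrec.const 0))
    · exact (Primrec.dom_bool₂ (· && ·)).comp₂
        (Primrec.snd.comp Primrec.snd).to₂
        ((hT.comp (Primrec.snd.comp Primrec.fst)
          (Primrec₂.natPair.comp (Primrec.fst.comp Primrec.fst)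
            (Primrec.succ.comp (Primrec.fst.comp Primrec.snd)))).to₂)
  have : Primrec fun q : (ℕ × ℕ) × ℕ =>
      (q.2.rec (towerT c q.1.2 (Nat.pair q.1.1 0))
        (fun m ih => ih && towerT c q.1.2 (Nat.pair q.1.1 (m + 1))) : Bool) :=
    hrec.comp Primrec.fst Primrec.snd
  refine this.of_eq fun ⟨⟨x, s⟩, n⟩ => ?_
  induction n with
  | zero => rfl
  | succ n ih => simp only [towerAll, ← ih]

theorem towerD_primrec (c : Code) : Primrec₂ (towerD c) := by
  have h1 : Primrec fun q : ℕ × ℕ => decide (q.1 ≤ q.2.unpair.1) :=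
    (Primrec.nat_le.comp Primrec.fst (Primrec.fst.comp (Primrec.unpair.comp Primrec.snd))).decide
  have h2 : Primrec fun q : ℕ × ℕ => towerAll c q.2.unpair.1 q.2.unpair.2 q.1 :=
    (towerAll_primrec c).comp ((Primrec.unpair.comp Primrec.snd).pair Primrec.fst)
  exact ((Primrec.dom_bool₂ (· && ·)).comp h1 h2).to₂

theorem towerD_iff {c : Code} {n t : ℕ} :
    towerD c n t = true ↔
      n ≤ t.unpair.1 ∧ ∀ i ≤ n, towerT c t.unpair.2 (Nat.pair t.unpair.1 i) = true := by
  simp [towerD, towerAll_iff]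

/-- Bounded search checker for membership in the range of `p` below `m`. -/
def memChk (p : ℕ → ℕ) (x : ℕ) : ℕ → Bool
  | 0 => decide (p 0 = x)
  | m + 1 => memChk p x m || decide (p (m + 1) = x)

theorem memChk_iff {p : ℕ → ℕ} {x m : ℕ} :
    memChk p x m = true ↔ ∃ n ≤ m, p n = x := by
  induction m with
  | zero =>
    simp only [memChk, decide_eq_true_eq]
    constructor
    · intro h; exact ⟨0, le_rfl, h⟩
    · rintro ⟨n, hn, hx⟩; interval_cases n; exact hx
  | succ m ih =>
    simp only [memChk, Bool.or_eq_true, decide_eq_true_eq, ih]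
    constructor
    · rintro (⟨n, hn, hx⟩ | hx)
      · exact ⟨n, hn.trans (Nat.le_succ m), hx⟩
      · exact ⟨m + 1, le_rfl, hx⟩
    · rintro ⟨n, hn, hx⟩
      rcases Nat.lt_or_ge n (m + 1) with h | h
      · exact Or.inl ⟨n, Nat.lt_succ_iff.1 h, hx⟩
      · have : n = m + 1 := le_antisymm hn h
        subst this; exact Or.inr hx

theorem memChk_computable {p : ℕ → ℕ} (hp : Computable p) :
    Computable fun x => memChk p x x := by
  have hrec : Computable fun x : ℕ => (x.rec (decide (p 0 = x))
      (fun m ih => ih || decide (p (m + 1) = x)) : Bool) := by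
    apply Computable.nat_rec (f := fun x : ℕ => x)
      (g := fun x : ℕ => decide (p 0 = x))
      (h := fun (x : ℕ) (q : ℕ × Bool) => q.2 || decide (p (q.1 + 1) = x))
      Computable.id
    · exact (Primrec.eq.comp (Primrec.const (p 0)) Primrec.id).decide.to_comp
    · refine Computable₂.mk ?_
      have hb : Computable₂ (· || · : Bool → Bool → Bool) :=
        (Primrec.dom_bool₂ (· || ·)).to_comp
      refine hb.comp (Computable.snd.comp Computable.snd) ?_
      have hpv : Computable fun q : ℕ × ℕ × Bool => p (q.2.1 + 1) :=
        hp.comp (Computable.succ.comp (Computable.fst.comp Computable.snd))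
      exact ((Primrec.eq (α := ℕ)).decide.to_comp.comp hpv Computable.fst)
  refine hrec.of_eq fun x => ?_
  have : ∀ m : ℕ, (m.rec (decide (p 0 = x))
      (fun k ih => ih || decide (p (k + 1) = x)) : Bool) = memChk p x m := by
    intro m
    induction m with
    | zero => rfl
    | succ m ih => simp only [memChk, ← ih]
  exact this x

/-- No tower is computably enumerable: if `G` is c.e. and describes a tower, then some
infinite computable set is almost contained in every level of the tower; in particular
the tower is not maximal among the computable sets. -/
theorem no_tower_is_ce (G : Set ℕ)
    (hG : REPred (· ∈ G))
    (hnested : ∀ n, (column G (n + 1) \ column G n).Finite)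
    (hdiff : ∀ n, (column G n \ column G (n + 1)).Infinite) :
    ∃ R : Set ℕ, ComputablePred (· ∈ R) ∧ R.Infinite ∧
      ∀ n, (R \ column G n).Finite := by
  -- Get a code for the c.e. set `G`.
  have hf : Partrec fun a : ℕ => (Part.assert (a ∈ G) fun _ => Part.some ()).map fun _ => (0 : ℕ) :=
    hG.map ((Computable.const 0).comp Computable.fst).to₂
  obtain ⟨c, hc⟩ := Code.exists_code.1 (Partrec.nat_iff.1 hf)
  -- Membership characterization via stages.
  have hmem : ∀ x, x ∈ G ↔ ∃ s, towerT c s x = true := by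
    intro x
    constructor
    · intro hx
      have h0 : (0 : ℕ) ∈ eval c x := by
        rw [hc]
        exact Part.mem_map _ (Part.mem_assert hx (Part.mem_some ()))
      obtain ⟨k, hk⟩ := evaln_complete.1 h0
      exact ⟨k, Option.isSome_iff_exists.2 ⟨0, hk⟩⟩
    · rintro ⟨s, hs⟩
      obtain ⟨y, hy⟩ := Option.isSome_iff_exists.1 hs
      have hy' : y ∈ eval c x := evaln_sound hy
      rw [hc] at hy'
      obtain ⟨u, hu, -⟩ := (Part.mem_map_iff _).1 hy'
      exact (Part.mem_assert_iff.1 hu).1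
  -- The intersection of the first `n+1` columns.
  set S : ℕ → Set ℕ := fun n => {x | ∀ i ≤ n, Nat.pair x i ∈ G} with hS
  have hSsub : ∀ {m n : ℕ}, m ≤ n → S n ⊆ column G m := fun hmn x hx => hx _ hmn
  have hfin : ∀ n, (column G n \ S n).Finite := by
    intro n
    induction n with
    | zero =>
      convert Set.finite_empty
      ext x
      simp only [Set.mem_diff, Set.mem_empty_iff_false, iff_false, not_and, not_not]
      intro hx i hi
      interval_cases i
      exact hx
    | succ n ih =>
      apply Set.Finite.subset ((hnested n).union ih)
      rintro x ⟨hx1, hx2⟩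
      by_cases hxn : x ∈ column G n
      · right
        refine ⟨hxn, fun hxS => hx2 fun i hi => ?_⟩
        rcases Nat.lt_or_ge i (n + 1) with h | h
        · exact hxS i (Nat.lt_succ_iff.1 h)
        · have : i = n + 1 := le_antisymm hi h
          subst this; exact hx1
      · exact Or.inl ⟨hx1, hxn⟩
  have hSinf : ∀ n, (S n).Infinite := by
    intro n
    have hcol : (column G n).Infinite := (hdiff n).mono Set.diff_subset
    refine (hcol.diff (hfin n)).mono fun x hx => ?_
    rcases hx with ⟨hx1, hx2⟩
    by_contra hxS
    exact hx2 ⟨hx1, hxS⟩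
  -- Existence of witnesses for the search.
  have Hex : ∀ n, ∃ t, towerD c n t = true := by
    intro n
    obtain ⟨x, hxS, hxn⟩ := (hSinf n).exists_gt n
    have hstage : ∀ m ≤ n, ∃ s, ∀ i ≤ m, towerT c s (Nat.pair x i) = true := by
      intro m hm
      induction m with
      | zero =>
        obtain ⟨s, hs⟩ := (hmem _).1 (hxS 0 (Nat.zero_le n))
        exact ⟨s, fun i hi => by interval_cases i; exact hs⟩
      | succ m ih =>
        obtain ⟨s1, hs1⟩ := ih ((Nat.le_succ m).trans hm)
        obtain ⟨s2, hs2⟩ := (hmem _).1 (hxS (m + 1) hm)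
        refine ⟨max s1 s2, fun i hi => ?_⟩
        rcases Nat.lt_or_ge i (m + 1) with h | h
        · exact towerT_mono (le_max_left _ _) (hs1 i (Nat.lt_succ_iff.1 h))
        · have : i = m + 1 := le_antisymm hi h
          subst this
          exact towerT_mono (le_max_right _ _) hs2
    obtain ⟨s, hs⟩ := hstage n le_rfl
    refine ⟨Nat.pair x s, ?_⟩
    simp only [towerD, Nat.unpair_pair, Bool.and_eq_true, decide_eq_true_eq]
    exact ⟨hxn.le, towerAll_iff.2 hs⟩
  -- Define the selector function `p`.
  set p : ℕ → ℕ := fun n => (Nat.find (Hex n)).unpair.1 with hp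
  have hpspec : ∀ n, towerD c n (Nat.find (Hex n)) = true := fun n => Nat.find_spec (Hex n)
  have hpge : ∀ n, n ≤ p n := by
    intro n
    simp only [hp]
    exact (towerD_iff.1 (hpspec n)).1
  have hpmem : ∀ n i, i ≤ n → Nat.pair (p n) i ∈ G := by
    intro n i hi
    simp only [hp]
    exact (hmem _).2 ⟨_, (towerD_iff.1 (hpspec n)).2 i hi⟩
  -- `p` is computable.
  have hpcomp : Computable p := by
    have hrf : Partrec fun n =>
        (Nat.rfind fun t => Part.some (towerD c n t)).map fun t => t.unpair.1 :=
      (Partrec.rfind ((towerD_primrec c).to_comp.partrec₂)).map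
        ((Primrec.fst.comp (Primrec.unpair.comp Primrec.snd)).to_comp.to₂)
    refine hrf.of_eq fun n => ?_
    have hmemrf : Nat.find (Hex n) ∈ Nat.rfind fun t => Part.some (towerD c n t) := by
      apply Nat.mem_rfind.2
      constructor
      · simpa using hpspec n
      · intro m hm
        simpa using Bool.eq_false_iff.2 fun h => Nat.find_min (Hex n) hm h
    rw [Part.eq_some_iff.2 hmemrf]
    rfl
  -- The computable set `R`.
  set R : Set ℕ := {x | ∃ n ≤ x, p n = x} with hR
  have hmemR : ∀ n, p n ∈ R := fun n => ⟨n, hpge n, rfl⟩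
  refine ⟨R, ?_, ?_, ?_⟩
  · -- computability of `R`
    rw [ComputablePred.computable_iff]
    refine ⟨fun x => memChk p x x, memChk_computable hpcomp, ?_⟩
    funext x
    simp only [hR, Set.mem_setOf_eq]
    exact propext memChk_iff.symm
  · -- `R` is infinite
    apply Set.infinite_of_forall_exists_gt
    intro a
    exact ⟨p (a + 1), hmemR (a + 1), lt_of_lt_of_le (Nat.lt_succ_self a) (hpge (a + 1))⟩
  · -- `R \ column G m` is finite
    intro m
    apply Set.Finite.subset ((Set.finite_Iio m).image p)
    rintro x ⟨⟨n, hn, rfl⟩, hx2⟩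
    refine ⟨n, ?_, rfl⟩
    by_contra h
    exact hx2 (hpmem n m (le_of_not_gt h))
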